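/- arXiv:1306.1686 — 10 statements merged into one kernel-verified Lean document; each statement's English description precedes it below -/
import Mathlib

section
/- Let δ ∈ [0,1], let a ∈ H and r₀ > 0 be such that the closed ball B̄(a, r₀) is contained in C, and define Π^δ z = P z − δ·(z − P z). Then for every z ∈ H one has ‖Π^δ z − a‖² + (1 − δ²)·‖z − P z‖² + 2 r₀ (1 + δ)·‖z − P z‖ ≤ ‖z − a‖². -/
open scoped RealInnerProductSpace

theorem stmt_0 {H : Type*} [NormedAddCommGroup H] [InnerProductSpace ℝ H] [CompleteSpace H]
    (C : Set H) (hCne : C.Nonempty) (hCcl : IsClosed C) (hCcv : Convex ℝ C)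
    (P : H → H)
    (hP : ∀ z : H, P z ∈ C ∧ ∀ c ∈ C, ⟪P z - z, P z - c⟫ ≤ 0)
    (δ : ℝ) (hδ : δ ∈ Set.Icc (0 : ℝ) 1)
    (a : H) (r₀ : ℝ) (hr₀ : 0 < r₀) (hball : Metric.closedBall a r₀ ⊆ C)
    (Pd : H → H) (hPd : ∀ z : H, Pd z = P z - δ • (z - P z)) :
    ∀ z : H,
      ‖Pd z - a‖ ^ 2 + (1 - δ ^ 2) * ‖z - P z‖ ^ 2 + 2 * r₀ * (1 + δ) * ‖z - P z‖
        ≤ ‖z - a‖ ^ 2 := by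
  intro z
  obtain ⟨hmem, hineq⟩ := hP z
  obtain ⟨hδ0, hδ1⟩ := hδ
  have hkey : r₀ * ‖z - P z‖ ≤ ⟪z - P z, P z - a⟫ := by
    by_cases hw : z - P z = 0
    · simp [hw]
    · have hnw : (0:ℝ) < ‖z - P z‖ := norm_pos_iff.mpr hw
      set u : H := ‖z - P z‖⁻¹ • (z - P z) with hu
      have hc : a + r₀ • u ∈ C := by
        apply hball
        simp only [Metric.mem_closedBall, dist_eq_norm, add_sub_cancel_left, norm_smul,
          hu, norm_inv, norm_norm, Real.norm_eq_abs, abs_of_pos hr₀, abs_of_pos hnw]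
        rw [inv_mul_cancel₀ hnw.ne']
        simp [hr₀.le]
      have h := hineq _ hc
      have hexp : ⟪P z - z, P z - (a + r₀ • u)⟫
          = -⟪z - P z, P z - a⟫ + r₀ * ‖z - P z‖ := by
        have h1 : ⟪z - P z, u⟫ = ‖z - P z‖ := by
          rw [hu, real_inner_smul_right, real_inner_self_eq_norm_sq]
          field_simp
        have h2 : (P z - (a + r₀ • u)) = (P z - a) - r₀ • u := by abel
        rw [h2, ← neg_sub z (P z), inner_neg_left, inner_sub_right, inner_smul_right, h1]
        ring
      rw [hexp] at h
      linarith
  have e1 : Pd z - a = (P z - a) - δ • (z - P z) := by rw [hPd]; abel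
  have e2 : z - a = (z - P z) + (P z - a) := by abel
  have n1 : ‖Pd z - a‖ ^ 2
      = ‖P z - a‖ ^ 2 - 2 * (δ * ⟪z - P z, P z - a⟫) + δ ^ 2 * ‖z - P z‖ ^ 2 := by
    rw [e1, @norm_sub_sq_real, real_inner_smul_right, norm_smul, real_inner_comm]
    rw [mul_pow, Real.norm_eq_abs, sq_abs]
  have n2 : ‖z - a‖ ^ 2
      = ‖z - P z‖ ^ 2 + 2 * ⟪z - P z, P z - a⟫ + ‖P z - a‖ ^ 2 := by
    rw [e2, @norm_add_sq_real]
  rw [n1, n2]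
  nlinarith [mul_le_mul_of_nonneg_left hkey (by linarith : (0:ℝ) ≤ 1 + δ)]
end

section
/- Let δ ∈ [0,1], let a ∈ H and r₀ > 0 with the closed ball B̄(a, r₀) contained in C, and define Π^δ z = P z − δ·(z − P z). For z ∈ H let z₀ = z and z_{n+1} = Π^δ z_n. Then the series ∑_{i=0}^∞ ‖P z_i − z_i‖ converges and ∑_{i=0}^∞ ‖P z_i − z_i‖ ≤ ‖z − a‖² / (2 r₀ (1 + δ)). -/
open scoped RealInnerProductSpace

theorem stmt_3 {H : Type*} [NormedAddCommGroup H] [InnerProductSpace ℝ H] [CompleteSpace H]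
    (C : Set H) (hCne : C.Nonempty) (hCcl : IsClosed C) (hCcv : Convex ℝ C)
    (P : H → H)
    (hP : ∀ z : H, P z ∈ C ∧ ∀ c ∈ C, ⟪P z - z, P z - c⟫ ≤ 0)
    (δ : ℝ) (hδ : δ ∈ Set.Icc (0 : ℝ) 1)
    (a : H) (r₀ : ℝ) (hr₀ : 0 < r₀) (hball : Metric.closedBall a r₀ ⊆ C)
    (Pd : H → H) (hPd : ∀ z : H, Pd z = P z - δ • (z - P z))
    (z : H) (zseq : ℕ → H) (hz0 : zseq 0 = z)
    (hzrec : ∀ n : ℕ, zseq (n + 1) = Pd (zseq n)) :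
    Summable (fun i : ℕ => ‖P (zseq i) - zseq i‖) ∧
      ∑' i : ℕ, ‖P (zseq i) - zseq i‖ ≤ ‖z - a‖ ^ 2 / (2 * r₀ * (1 + δ)) := by
  obtain ⟨hδ0, hδ1⟩ := hδ
  have hpos : 0 < 2 * r₀ * (1 + δ) := by nlinarith
  have key : ∀ n : ℕ, 2 * r₀ * (1 + δ) * ‖P (zseq n) - zseq n‖ ≤
      ‖zseq n - a‖ ^ 2 - ‖zseq (n + 1) - a‖ ^ 2 := by
    intro n
    set zn := zseq n with hzn
    set p := P zn with hp
    set v : H := p - zn with hv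
    have hnext : zseq (n + 1) = zn + (1 + δ) • v := by
      rw [hzrec n, hPd, hv, ← hp]
      module
    have hinner : ⟪v, p - a⟫ ≤ -(r₀ * ‖v‖) := by
      by_cases hv0 : v = 0
      · simp [hv0]
      · have hnv : 0 < ‖v‖ := norm_pos_iff.2 hv0
        have hc : a - (r₀ / ‖v‖) • v ∈ C := by
          apply hball
          simp only [Metric.mem_closedBall, dist_eq_norm]
          rw [show a - (r₀ / ‖v‖) • v - a = -((r₀ / ‖v‖) • v) by abel, norm_neg, norm_smul,
            Real.norm_eq_abs, abs_of_pos (div_pos hr₀ hnv), div_mul_cancel₀ _ hnv.ne']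
        have h1 := (hP zn).2 _ hc
        rw [← hp, ← hv] at h1
        rw [show p - (a - (r₀ / ‖v‖) • v) = (p - a) + (r₀ / ‖v‖) • v by abel,
          inner_add_right, real_inner_smul_right, real_inner_self_eq_norm_sq] at h1
        have : r₀ / ‖v‖ * ‖v‖ ^ 2 = r₀ * ‖v‖ := by field_simp
        linarith [this ▸ h1]
    have hexp : ‖zseq (n + 1) - a‖ ^ 2 =
        ‖zn - a‖ ^ 2 + 2 * ((1 + δ) * ⟪v, zn - a⟫) + (1 + δ) ^ 2 * ‖v‖ ^ 2 := by
      rw [hnext, show zn + (1 + δ) • v - a = (zn - a) + (1 + δ) • v by abel,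
        @norm_add_sq_real, real_inner_smul_right, norm_smul, Real.norm_eq_abs,
        mul_pow, sq_abs, real_inner_comm]
    have hsplit : ⟪v, zn - a⟫ = -‖v‖ ^ 2 + ⟪v, p - a⟫ := by
      rw [show zn - a = -v + (p - a) by rw [hv]; abel, inner_add_right, inner_neg_right,
        real_inner_self_eq_norm_sq]
    nlinarith [norm_nonneg v, sq_nonneg (‖v‖ * (1 - δ)), mul_le_mul_of_nonneg_left hinner (by linarith : (0:ℝ) ≤ 1 + δ)]
  have hnn : ∀ i : ℕ, 0 ≤ ‖P (zseq i) - zseq i‖ := fun i => norm_nonneg _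
  have hpartial : ∀ n : ℕ, ∑ i ∈ Finset.range n, ‖P (zseq i) - zseq i‖ ≤
      ‖z - a‖ ^ 2 / (2 * r₀ * (1 + δ)) := by
    intro n
    rw [le_div_iff₀ hpos]
    have h1 : ∑ i ∈ Finset.range n, (2 * r₀ * (1 + δ) * ‖P (zseq i) - zseq i‖) ≤
        ∑ i ∈ Finset.range n, (‖zseq i - a‖ ^ 2 - ‖zseq (i + 1) - a‖ ^ 2) :=
      Finset.sum_le_sum fun i _ => key i
    rw [Finset.sum_range_sub' (fun i => ‖zseq i - a‖ ^ 2)] at h1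
    calc (∑ i ∈ Finset.range n, ‖P (zseq i) - zseq i‖) * (2 * r₀ * (1 + δ))
        = ∑ i ∈ Finset.range n, (2 * r₀ * (1 + δ) * ‖P (zseq i) - zseq i‖) := by
          rw [Finset.sum_mul]; exact Finset.sum_congr rfl fun i _ => mul_comm _ _
      _ ≤ ‖zseq 0 - a‖ ^ 2 - ‖zseq n - a‖ ^ 2 := h1
      _ ≤ ‖z - a‖ ^ 2 := by rw [hz0]; nlinarith [sq_nonneg ‖zseq n - a‖]
  have hsum := summable_of_sum_range_le hnn hpartial
  exact ⟨hsum, Summable.tsum_le_of_sum_range_le hsum hpartial⟩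
end

section
/- Let Π be a generalized projection onto C. Then for every x ∈ H and every a ∈ C, ⟪Π x − a, Π x − x⟫ ≤ (1/2)·‖Π x − x‖². -/
open scoped RealInnerProductSpace

theorem stmt_5 {H : Type*} [NormedAddCommGroup H] [InnerProductSpace ℝ H] [CompleteSpace H]
    (C : Set H) (hCne : C.Nonempty)
    (Proj : H → H)
    (hProjC : ∀ x : H, Proj x ∈ C)
    (hProjid : ∀ x ∈ C, Proj x = x)
    (hProjne : ∀ x y : H, ‖Proj x - Proj y‖ ≤ ‖x - y‖) :
    ∀ x : H, ∀ a ∈ C, ⟪Proj x - a, Proj x - x⟫ ≤ (1 / 2) * ‖Proj x - x‖ ^ 2 := by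
  intro x a ha
  have h := hProjne x a
  rw [hProjid a ha] at h
  have hx : x - a = (Proj x - a) - (Proj x - x) := by abel
  have hexp : ‖x - a‖ ^ 2 = ‖Proj x - a‖ ^ 2 - 2 * ⟪Proj x - a, Proj x - x⟫ + ‖Proj x - x‖ ^ 2 := by
    rw [hx]
    have := norm_sub_sq_real (Proj x - a) (Proj x - x)
    nlinarith [this]
  nlinarith [sq_nonneg (‖x - a‖ - ‖Proj x - a‖), norm_nonneg (x - a), norm_nonneg (Proj x - a)]
end

section
/- Let Π be a generalized projection onto C, and let a ∈ H and r₀ > 0 be such that the closed ball B̄(a, r₀) is contained in C. Then for every x ∈ H, r₀·‖Π x − x‖ ≤ ⟪a − Π x, Π x − x⟫ + (1/2)·‖Π x − x‖². -/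
open scoped RealInnerProductSpace

theorem stmt_6 {H : Type*} [NormedAddCommGroup H] [InnerProductSpace ℝ H] [CompleteSpace H]
    (C : Set H) (hCne : C.Nonempty)
    (Proj : H → H)
    (hProjC : ∀ x : H, Proj x ∈ C)
    (hProjid : ∀ x ∈ C, Proj x = x)
    (hProjne : ∀ x y : H, ‖Proj x - Proj y‖ ≤ ‖x - y‖)
    (a : H) (r₀ : ℝ) (hr₀ : 0 < r₀) (hball : Metric.closedBall a r₀ ⊆ C) :
    ∀ x : H, r₀ * ‖Proj x - x‖ ≤ ⟪a - Proj x, Proj x - x⟫ + (1 / 2) * ‖Proj x - x‖ ^ 2 := by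
  intro x
  set d := Proj x - x with hd
  by_cases h0 : d = 0
  · simp [h0]
  · have hdn : (0:ℝ) < ‖d‖ := norm_pos_iff.mpr h0
    set u : H := ‖d‖⁻¹ • d with hu
    have hun : ‖u‖ = 1 := by
      rw [hu, norm_smul, norm_inv, norm_norm, inv_mul_cancel₀ hdn.ne']
    set y : H := a - r₀ • u with hy
    have hyC : y ∈ C := by
      apply hball
      simp only [Metric.mem_closedBall, dist_eq_norm, hy]
      rw [sub_sub_cancel_left, norm_neg, norm_smul, hun, Real.norm_eq_abs,
        abs_of_pos hr₀, mul_one]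
    have h1 : ‖Proj x - y‖ ≤ ‖x - y‖ := by
      have := hProjne x y
      rwa [hProjid y hyC] at this
    have h2 : ‖Proj x - y‖ ^ 2 ≤ ‖x - y‖ ^ 2 := by
      exact pow_le_pow_left₀ (norm_nonneg _) h1 2
    have hdec : Proj x - y = d + (x - y) := by rw [hd]; abel
    have h3 : ‖d‖ ^ 2 + 2 * ⟪d, x - y⟫ ≤ 0 := by
      have expand : ‖Proj x - y‖ ^ 2 = ‖d‖ ^ 2 + 2 * ⟪d, x - y⟫ + ‖x - y‖ ^ 2 := by
        rw [hdec, ← real_inner_self_eq_norm_sq, ← real_inner_self_eq_norm_sq,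
          ← real_inner_self_eq_norm_sq]
        rw [inner_add_add_self, real_inner_comm (x - y) d]
        ring
      nlinarith [h2, expand]
    have hdu : ⟪d, u⟫ = ‖d‖ := by
      rw [hu, real_inner_smul_right, real_inner_self_eq_norm_sq]
      field_simp
    have h4 : ⟪d, x - y⟫ = ⟪d, x - a⟫ + r₀ * ‖d‖ := by
      have : x - y = (x - a) + r₀ • u := by rw [hy]; abel
      rw [this, inner_add_right, real_inner_smul_right, hdu]
    have h5 : ⟪d, x - a⟫ = -⟪a - Proj x, d⟫ - ‖d‖ ^ 2 := by
      have : x - a = -(a - Proj x) - d := by rw [hd]; abel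
      rw [this, inner_sub_right, inner_neg_right, real_inner_comm,
        real_inner_self_eq_norm_sq]
    have hcomm : ⟪a - Proj x, d⟫ = ⟪a - Proj x, Proj x - x⟫ := by rw [hd]
    nlinarith [h3, h4, h5, hcomm]
end

section
/- Let A : H → Set H be a maximal monotone operator. Then the closure of the domain D(A) = {x ∈ H : A x ≠ ∅} is a convex subset of H. -/
open scoped RealInnerProductSpace

section AuxiliaryLemmas

variable {H : Type*} [NormedAddCommGroup H] [InnerProductSpace ℝ H]

lemma double_sum_identity {ι : Type*} [Fintype ι] (l : ι → ℝ) (hl : ∑ i, l i = 1) (v : ι → H) :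
    ∑ i, ∑ j, l i * l j * ‖v i - v j‖ ^ 2
      = 2 * (∑ i, l i * ‖v i‖ ^ 2) - 2 * ‖∑ i, l i • v i‖ ^ 2 := by
  have hb : ‖∑ i, l i • v i‖ ^ 2 = ∑ i, ∑ j, l i * l j * ⟪v i, v j⟫ := by
    rw [← real_inner_self_eq_norm_sq, sum_inner]
    refine Finset.sum_congr rfl fun i _ => ?_
    rw [real_inner_smul_left, inner_sum, Finset.mul_sum]
    exact Finset.sum_congr rfl fun j _ => by rw [real_inner_smul_right]; ring
  have h1 : ∑ i, ∑ j, l i * l j * ‖v i‖ ^ 2 = ∑ i, l i * ‖v i‖ ^ 2 := by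
    refine Finset.sum_congr rfl fun i _ => ?_
    have : ∑ j, l i * l j * ‖v i‖ ^ 2 = (l i * ‖v i‖ ^ 2) * ∑ j, l j := by
      rw [Finset.mul_sum]; exact Finset.sum_congr rfl fun j _ => by ring
    rw [this, hl, mul_one]
  have h2 : ∑ i, ∑ j, l i * l j * ‖v j‖ ^ 2 = ∑ j, l j * ‖v j‖ ^ 2 := by
    rw [Finset.sum_comm]
    refine Finset.sum_congr rfl fun j _ => ?_
    have : ∑ i, l i * l j * ‖v j‖ ^ 2 = (l j * ‖v j‖ ^ 2) * ∑ i, l i := by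
      rw [Finset.mul_sum]; exact Finset.sum_congr rfl fun i _ => by ring
    rw [this, hl, mul_one]
  have expand : ∀ i j : ι, l i * l j * ‖v i - v j‖ ^ 2
      = l i * l j * ‖v i‖ ^ 2 + l i * l j * ‖v j‖ ^ 2 - 2 * (l i * l j * ⟪v i, v j⟫) := by
    intro i j
    rw [norm_sub_sq_real]; ring
  calc ∑ i, ∑ j, l i * l j * ‖v i - v j‖ ^ 2
      = ∑ i, ∑ j, (l i * l j * ‖v i‖ ^ 2 + l i * l j * ‖v j‖ ^ 2
          - 2 * (l i * l j * ⟪v i, v j⟫)) := by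
        exact Finset.sum_congr rfl fun i _ => Finset.sum_congr rfl fun j _ => expand i j
    _ = (∑ i, ∑ j, l i * l j * ‖v i‖ ^ 2) + (∑ i, ∑ j, l i * l j * ‖v j‖ ^ 2)
          - 2 * (∑ i, ∑ j, l i * l j * ⟪v i, v j⟫) := by
        simp [Finset.sum_add_distrib, Finset.sum_sub_distrib, Finset.mul_sum]
    _ = 2 * (∑ i, l i * ‖v i‖ ^ 2) - 2 * ‖∑ i, l i • v i‖ ^ 2 := by
        rw [h1, h2, hb]; ring

lemma finite_kirszbraun {ι : Type*} [Fintype ι] (a g : ι → H) (z : H)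
    (hf : ∀ i j, ‖g i - g j‖ ≤ ‖a i - a j‖) :
    ∃ w : H, ∀ i, ‖w - g i‖ ≤ ‖z - a i‖ := by
  classical
  cases isEmpty_or_nonempty ι with
  | inl h => exact ⟨0, fun i => h.elim i⟩
  | inr h =>
  set r : ι → ℝ := fun i => ‖z - a i‖ with hr
  set c : ι → ℝ := fun i => r i ^ 2 - ‖g i‖ ^ 2 with hc
  set G : (ι → ℝ) → ℝ := fun l => (∑ i, l i * c i) + ‖∑ i, l i • g i‖ ^ 2 with hG
  have hGcont : ContinuousOn G (stdSimplex ℝ ι) := by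
    apply Continuous.continuousOn
    apply Continuous.add
    · exact continuous_finset_sum _ fun i _ => (continuous_apply i).mul continuous_const
    · exact ((continuous_finset_sum _ fun i _ =>
        (continuous_apply i).smul continuous_const).norm).pow 2
  have hne : (stdSimplex ℝ ι).Nonempty := ⟨_, ite_eq_mem_stdSimplex ℝ h.some⟩
  obtain ⟨μ, hμ, hmin⟩ := (isCompact_stdSimplex ℝ ι).exists_isMinOn hne hGcont
  set b : H := ∑ i, μ i • g i with hb
  -- Claim A : 0 ≤ G l on simplex
  have claimA : ∀ l ∈ stdSimplex ℝ ι, 0 ≤ G l := by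
    intro l hl
    have hsum : ∑ i, l i = 1 := hl.2
    have hnn : ∀ i, 0 ≤ l i := fun i => hl.1 i
    have hgle : ∑ i, ∑ j, l i * l j * ‖g i - g j‖ ^ 2
        ≤ ∑ i, ∑ j, l i * l j * ‖(fun k => z - a k) i - (fun k => z - a k) j‖ ^ 2 := by
      refine Finset.sum_le_sum fun i _ => Finset.sum_le_sum fun j _ => ?_
      have h1 : ‖(z - a i) - (z - a j)‖ = ‖a i - a j‖ := by
        rw [show (z - a i) - (z - a j) = -(a i - a j) by abel, norm_neg]
      have h2 : ‖g i - g j‖ ^ 2 ≤ ‖(fun k => z - a k) i - (fun k => z - a k) j‖ ^ 2 := by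
        simp only []
        rw [h1]
        exact pow_le_pow_left₀ (norm_nonneg _) (hf i j) 2
      exact mul_le_mul_of_nonneg_left h2 (mul_nonneg (hnn i) (hnn j))
    rw [double_sum_identity l hsum g, double_sum_identity l hsum (fun k => z - a k)] at hgle
    have hsplit : ∑ i, l i * c i = (∑ i, l i * r i ^ 2) - ∑ i, l i * ‖g i‖ ^ 2 := by
      rw [← Finset.sum_sub_distrib]
      exact Finset.sum_congr rfl fun i _ => by rw [hc]; ring
    have hrn : ∑ i, l i * ‖z - a i‖ ^ 2 = ∑ i, l i * r i ^ 2 := by rw [hr]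
    rw [hrn] at hgle
    have hnn2 : 0 ≤ ‖∑ i, l i • (z - a i)‖ ^ 2 := sq_nonneg _
    simp only [hG]
    rw [hsplit]
    linarith
  -- Claim B : first order condition
  have claimB : ∀ i, ‖b - g i‖ ^ 2 ≤ r i ^ 2 - G μ := by
    intro i
    set d : H := g i - b with hd
    have key : ∀ t : ℝ, 0 < t → t ≤ 1 →
        0 ≤ t * (c i - (∑ j, μ j * c j) + 2 * ⟪b, d⟫) + t ^ 2 * ‖d‖ ^ 2 := by
      intro t ht0 ht1
      set l : ι → ℝ := fun j => μ j + t * ((if i = j then 1 else 0) - μ j) with hldef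
      have hlmem : l ∈ stdSimplex ℝ ι := by
        have h2 := convex_stdSimplex ℝ ι hμ (ite_eq_mem_stdSimplex ℝ i)
          (a := 1 - t) (b := t) (by linarith) (le_of_lt ht0) (by ring)
        convert h2 using 1
        funext j
        simp only [hldef, Pi.add_apply, Pi.smul_apply, smul_eq_mul]
        ring
      have hsum1 : ∑ j, l j * c j = (∑ j, μ j * c j) + t * (c i - ∑ j, μ j * c j) := by
        have e : ∀ j, l j * c j = μ j * c j + ((if i = j then t * c j else 0) - t * (μ j * c j)) := by
          intro j
          by_cases hij : i = j <;> simp [hldef, hij] <;> ring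
        rw [Finset.sum_congr rfl fun j _ => e j, Finset.sum_add_distrib, Finset.sum_sub_distrib,
          Finset.sum_ite_eq, ← Finset.mul_sum]
        simp [mul_sub]
      have hsum2 : ∑ j, l j • g j = b + t • d := by
        have e : ∀ j, l j • g j
            = μ j • g j + ((if i = j then t • g j else 0) - t • (μ j • g j)) := by
          intro j
          rcases eq_or_ne i j with hij | hij
          · subst hij
            simp only [hldef, eq_self_iff_true, if_true]
            try module
          · simp only [hldef, if_neg hij]
            try module
        rw [Finset.sum_congr rfl fun j _ => e j, Finset.sum_add_distrib, Finset.sum_sub_distrib,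
          Finset.sum_ite_eq, ← Finset.smul_sum]
        simp only [Finset.mem_univ, if_true, ← hb, hd, smul_sub]
        try abel
      have hGl : G l = G μ + (t * (c i - (∑ j, μ j * c j) + 2 * ⟪b, d⟫) + t ^ 2 * ‖d‖ ^ 2) := by
        simp only [hG]
        rw [hsum1, hsum2, norm_add_sq_real, real_inner_smul_right, norm_smul]
        simp only [Real.norm_eq_abs, mul_pow, sq_abs, ← hb]
        ring
      have h3 : G μ ≤ G l := hmin hlmem
      rw [hGl] at h3
      linarith
    have hA0 : 0 ≤ c i - (∑ j, μ j * c j) + 2 * ⟪b, d⟫ := by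
      by_contra hneg
      push_neg at hneg
      set A0 : ℝ := c i - (∑ j, μ j * c j) + 2 * ⟪b, d⟫ with hA0def
      set t : ℝ := min 1 (-A0 / (2 * (‖d‖ ^ 2 + 1))) with htdef
      have hden : (0:ℝ) < 2 * (‖d‖ ^ 2 + 1) := by positivity
      have ht0 : 0 < t := lt_min one_pos (div_pos (by linarith) hden)
      have ht1 : t ≤ 1 := min_le_left _ _
      have ht2 : t ≤ -A0 / (2 * (‖d‖ ^ 2 + 1)) := min_le_right _ _
      have hkey := key t ht0 ht1
      have htd : t * (2 * (‖d‖ ^ 2 + 1)) ≤ -A0 := by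
        rw [← le_div_iff₀ hden] at *
        exact ht2
      nlinarith [sq_nonneg t, mul_pos ht0 ht0, norm_nonneg d, sq_nonneg (‖d‖)]
    have hip : ⟪b, d⟫ = ⟪b, g i⟫ - ‖b‖ ^ 2 := by
      rw [hd, inner_sub_right, real_inner_self_eq_norm_sq]
    have hGmu : G μ = (∑ j, μ j * c j) + ‖b‖ ^ 2 := by simp only [hG, hb]
    have hbg : ‖b - g i‖ ^ 2 = ‖b‖ ^ 2 - 2 * ⟪b, g i⟫ + ‖g i‖ ^ 2 := norm_sub_sq_real b (g i)
    have hci : c i = r i ^ 2 - ‖g i‖ ^ 2 := by rw [hc]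
    rw [hip] at hA0
    rw [hbg, hGmu]
    linarith
  refine ⟨b, fun i => ?_⟩
  have h1 : ‖b - g i‖ ^ 2 ≤ r i ^ 2 := le_trans (claimB i) (by linarith [claimA μ hμ])
  have h2 : 0 ≤ r i := norm_nonneg _
  nlinarith [norm_nonneg (b - g i)]

lemma kirszbraun_point [CompleteSpace H] (S : Set H) (f : H → H)
    (hf : ∀ a ∈ S, ∀ b ∈ S, ‖f a - f b‖ ≤ ‖a - b‖) (z : H) :
    ∃ w : H, ∀ a ∈ S, ‖w - f a‖ ≤ ‖z - a‖ := by
  classical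
  rcases S.eq_empty_or_nonempty with hS | ⟨a0, ha0⟩
  · exact ⟨z, fun a ha => by rw [hS] at ha; exact absurd ha (Set.notMem_empty a)⟩
  set P : Finset H → Prop := fun F => ↑F ⊆ S ∧ a0 ∈ F with hP
  set Z : Finset H → Set H := fun F => ⋂ a ∈ F, Metric.closedBall (f a) ‖z - a‖ with hZ
  have hZmem : ∀ F : Finset H, ∀ u, u ∈ Z F ↔ ∀ a ∈ F, ‖u - f a‖ ≤ ‖z - a‖ := by
    intro F u
    simp only [hZ, Set.mem_iInter, Metric.mem_closedBall, dist_eq_norm]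
  have hZne : ∀ F : Finset H, ↑F ⊆ S → (Z F).Nonempty := by
    intro F hFS
    obtain ⟨w, hw⟩ := finite_kirszbraun (ι := {x // x ∈ F}) (fun x => (x : H)) (fun x => f x) z
      (fun i j => hf _ (hFS i.2) _ (hFS j.2))
    exact ⟨w, (hZmem F w).2 fun a ha => hw ⟨a, ha⟩⟩
  have hZconv : ∀ F, Convex ℝ (Z F) := fun F => convex_iInter₂ fun a _ => convex_closedBall _ _
  have hZclosed : ∀ F, IsClosed (Z F) :=
    fun F => isClosed_biInter fun a _ => Metric.isClosed_closedBall
  have hZanti : ∀ F F' : Finset H, F ⊆ F' → Z F' ⊆ Z F := by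
    intro F F' hFF u hu
    exact (hZmem F u).2 fun a ha => (hZmem F' u).1 hu a (hFF ha)
  set p : H := f a0 with hp
  have hproj : ∀ F : Finset H, ↑F ⊆ S → ∃ v ∈ Z F, ‖p - v‖ = ⨅ w : Z F, ‖p - w‖ :=
    fun F hFS => exists_norm_eq_iInf_of_complete_convex (hZne F hFS)
      ((hZclosed F).isComplete) (hZconv F) p
  choose! q hqmem hqdist using hproj
  set dd : Finset H → ℝ := fun F => ‖p - q F‖ with hdd
  have hddnn : ∀ F, 0 ≤ dd F := fun F => norm_nonneg _
  have hinf : ∀ F : Finset H, ↑F ⊆ S → ∀ u ∈ Z F, dd F ≤ ‖p - u‖ := by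
    intro F hFS u hu
    rw [hdd]
    simp only []
    rw [hqdist F hFS]
    exact ciInf_le ⟨0, by rintro x ⟨w, rfl⟩; exact norm_nonneg _⟩ (⟨u, hu⟩ : Z F)
  -- the key parallelogram estimate
  have hkey : ∀ F : Finset H, ↑F ⊆ S → ∀ u ∈ Z F,
      ‖q F - u‖ ^ 2 ≤ 2 * ‖p - u‖ ^ 2 - 2 * dd F ^ 2 := by
    intro F hFS u hu
    set m : H := (1/2 : ℝ) • q F + (1/2 : ℝ) • u with hm
    have hmmem : m ∈ Z F := (hZconv F) (hqmem F hFS) hu (by norm_num) (by norm_num) (by norm_num)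
    have hdm : dd F ≤ ‖m - p‖ := by rw [norm_sub_rev]; exact hinf F hFS m hmmem
    have hpar := parallelogram_law_with_norm ℝ (q F - p) (u - p)
    have e1 : (q F - p) + (u - p) = (2:ℝ) • (m - p) := by rw [hm]; module
    have e2 : (q F - p) - (u - p) = q F - u := by abel
    rw [e1, e2] at hpar
    have e3 : ‖(2:ℝ) • (m - p)‖ = 2 * ‖m - p‖ := by
      rw [norm_smul, Real.norm_ofNat]
    rw [e3] at hpar
    have e4 : ‖q F - p‖ = dd F := by rw [norm_sub_rev, hdd]
    have e5 : ‖u - p‖ = ‖p - u‖ := norm_sub_rev u p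
    rw [e4, e5] at hpar
    nlinarith [hpar, hdm, hddnn F, norm_nonneg (m - p)]
  -- upper bound R
  set R : ℝ := ‖z - a0‖ with hR
  have hdle : ∀ F : Finset H, P F → dd F ≤ R := by
    intro F hPF
    have := (hZmem F (q F)).1 (hqmem F hPF.1) a0 hPF.2
    rw [hdd]
    simp only []
    rw [norm_sub_rev]
    exact this
  -- the sup of distances
  set DD : Set ℝ := dd '' {F | P F} with hDD
  have hDDne : DD.Nonempty := ⟨dd {a0}, ⟨{a0}, ⟨by simp [ha0], Finset.mem_singleton_self a0⟩, rfl⟩⟩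
  have hDDbdd : BddAbove DD := ⟨R, by rintro x ⟨F, hPF, rfl⟩; exact hdle F hPF⟩
  set D : ℝ := sSup DD with hD
  have hDle : ∀ F, P F → dd F ≤ D := fun F hPF => le_csSup hDDbdd ⟨F, hPF, rfl⟩
  have hDR : D ≤ R := csSup_le hDDne (by rintro x ⟨F, hPF, rfl⟩; exact hdle F hPF)
  have hDnn : 0 ≤ D := le_trans (hddnn _) (hDle {a0} ⟨by simp [ha0], Finset.mem_singleton_self a0⟩)
  -- choose good finsets
  have hFn : ∀ n : ℕ, ∃ F : Finset H, P F ∧ D - 1/(n+1) < dd F := by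
    intro n
    have h1 : D - 1/(n+1) < D := by
      have : (0:ℝ) < 1/(n+1) := by positivity
      linarith
    obtain ⟨x, ⟨F, hPF, rfl⟩, hx⟩ := exists_lt_of_lt_csSup hDDne h1
    exact ⟨F, hPF, hx⟩
  choose Fn hPFn hdFn using hFn
  set E : ℕ → Finset H := fun n => (Finset.range (n+1)).biUnion Fn with hE
  have hPE : ∀ n, P (E n) := by
    intro n
    constructor
    · intro x hx
      simp only [hE, Finset.coe_biUnion, Set.mem_iUnion, Finset.mem_coe] at hx
      obtain ⟨k, _, hk⟩ := hx
      exact (hPFn k).1 hk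
    · exact Finset.mem_biUnion.2 ⟨0, Finset.mem_range.2 (Nat.succ_pos n), (hPFn 0).2⟩
  have hEmono : ∀ n m : ℕ, n ≤ m → E n ⊆ E m := by
    intro n m hnm
    exact Finset.biUnion_subset_biUnion_of_subset_left _
      (Finset.range_subset_range.2 (Nat.succ_le_succ hnm))
  have hdE : ∀ n, D - 1/(n+1) < dd (E n) := by
    intro n
    refine lt_of_lt_of_le (hdFn n) ?_
    -- dd monotone: Fn n ⊆ E n
    have hsub : Fn n ⊆ E n := Finset.subset_biUnion_of_mem Fn (Finset.mem_range.2 (Nat.lt_succ_self n))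
    exact hinf (Fn n) (hPFn n).1 (q (E n)) (hZanti _ _ hsub (hqmem (E n) (hPE n).1))
  -- estimate: for F admissible containing E N : ‖q (E N) - q F‖^2 ≤ 4*R/(N+1)
  have hest : ∀ N : ℕ, ∀ F : Finset H, P F → E N ⊆ F →
      ‖q (E N) - q F‖ ^ 2 ≤ 4 * R / (N+1) := by
    intro N F hPF hEF
    have h1 : q F ∈ Z (E N) := hZanti _ _ hEF (hqmem F hPF.1)
    have h2 := hkey (E N) (hPE N).1 (q F) h1
    have h3 : ‖p - q F‖ = dd F := rfl
    rw [h3] at h2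
    have h4 : dd F ≤ D := hDle F hPF
    have h5 : D - 1/(N+1) < dd (E N) := hdE N
    have h6 : dd (E N) ≤ D := hDle (E N) (hPE N)
    have h7 : dd F ^ 2 - dd (E N) ^ 2 ≤ 2 * R / (N+1) := by
      have e : dd F ^ 2 - dd (E N) ^ 2 = (dd F - dd (E N)) * (dd F + dd (E N)) := by ring
      rw [e]
      have hfac1 : dd F - dd (E N) ≤ 1/(N+1) := by linarith
      have hfac2 : dd F + dd (E N) ≤ 2 * R := by
        have := hdle F hPF; have := hdle (E N) (hPE N); linarith
      have hfac1nn : 0 ≤ dd F + dd (E N) := by have := hddnn F; have := hddnn (E N); linarith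
      calc (dd F - dd (E N)) * (dd F + dd (E N)) ≤ (1/(N+1)) * (2*R) := by
            apply mul_le_mul hfac1 hfac2 hfac1nn (by positivity)
        _ = 2 * R / (N+1) := by ring
    have h8 := mul_le_mul_of_nonneg_left h7 (by norm_num : (0:ℝ) ≤ 2)
    calc ‖q (E N) - q F‖ ^ 2 ≤ 2 * dd F ^ 2 - 2 * dd (E N) ^ 2 := h2
      _ = 2 * (dd F ^ 2 - dd (E N) ^ 2) := by ring
      _ ≤ 2 * (2 * R / (N+1)) := h8
      _ = 4 * R / (N+1) := by ring
  -- Cauchy sequence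
  set qn : ℕ → H := fun n => q (E n) with hqn
  have hqcau : CauchySeq qn := by
    refine cauchySeq_of_le_tendsto_0 (fun N => 2 * Real.sqrt (4 * R / (N+1))) ?_ ?_
    · intro n m N hn hm
      have hb : ∀ k, N ≤ k → dist (qn N) (qn k) ≤ Real.sqrt (4 * R / (N+1)) := by
        intro k hk
        have h1 := hest N (E k) (hPE k) (hEmono N k hk)
        rw [dist_eq_norm]
        have h2 : (0:ℝ) ≤ 4 * R / (N+1) := by
          have : (0:ℝ) ≤ R := le_trans (hddnn _) (hdle {a0} ⟨by simp [ha0], Finset.mem_singleton_self a0⟩)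
          positivity
        nlinarith [Real.sq_sqrt h2, Real.sqrt_nonneg (4 * R / (N+1)), norm_nonneg (qn N - qn k),
          Real.sqrt_nonneg (4 * R / (N+1))]
      calc dist (qn n) (qn m) ≤ dist (qn n) (qn N) + dist (qn N) (qn m) := dist_triangle _ _ _
        _ ≤ Real.sqrt (4 * R / (N+1)) + Real.sqrt (4 * R / (N+1)) := by
            have := hb n hn; have := hb m hm; rw [dist_comm (qn n) (qn N)]; linarith
        _ = 2 * Real.sqrt (4 * R / (N+1)) := by ring
    · have h0 : Filter.Tendsto (fun N : ℕ => 4 * R / (N+1)) Filter.atTop (nhds 0) := by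
        have := tendsto_one_div_add_atTop_nhds_zero_nat (𝕜 := ℝ)
        have h2 := this.const_mul (4 * R)
        simp only [mul_zero] at h2
        convert h2 using 2 with N
        ring
      have h1 := h0.sqrt
      rw [Real.sqrt_zero] at h1
      have h2 := h1.const_mul 2
      rw [mul_zero] at h2
      exact h2
  obtain ⟨w, hw⟩ := cauchySeq_tendsto_of_complete hqcau
  refine ⟨w, fun a ha => ?_⟩
  -- consider Gn := insert a (E n)
  set Gn : ℕ → Finset H := fun n => insert a (E n) with hGn
  have hPGn : ∀ n, P (Gn n) := by
    intro n
    refine ⟨?_, Finset.mem_insert_of_mem (hPE n).2⟩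
    intro x hx
    simp only [hGn, Finset.coe_insert, Set.mem_insert_iff, Finset.mem_coe] at hx
    rcases hx with rfl | hx
    · exact ha
    · exact (hPE n).1 hx
  have hdist : ∀ n, dist (qn n) (q (Gn n)) ≤ Real.sqrt (4 * R / (n+1)) := by
    intro n
    have h1 := hest n (Gn n) (hPGn n) (Finset.subset_insert a (E n))
    rw [dist_eq_norm]
    have h2 : (0:ℝ) ≤ 4 * R / (n+1) := by
      have : (0:ℝ) ≤ R := le_trans (hddnn _) (hdle {a0} ⟨by simp [ha0], Finset.mem_singleton_self a0⟩)
      positivity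
    nlinarith [Real.sq_sqrt h2, Real.sqrt_nonneg (4 * R / (n+1)), norm_nonneg (qn n - q (Gn n))]
  have htend : Filter.Tendsto (fun n => q (Gn n)) Filter.atTop (nhds w) := by
    apply hw.congr_dist
    apply squeeze_zero (fun n => dist_nonneg) hdist
    have h0 : Filter.Tendsto (fun N : ℕ => 4 * R / (N+1)) Filter.atTop (nhds 0) := by
      have := tendsto_one_div_add_atTop_nhds_zero_nat (𝕜 := ℝ)
      have h2 := this.const_mul (4 * R)
      simp only [mul_zero] at h2
      convert h2 using 2 with N
      ring
    have h1 := h0.sqrt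
    rwa [Real.sqrt_zero] at h1
  have hball : ∀ n, q (Gn n) ∈ Metric.closedBall (f a) ‖z - a‖ := by
    intro n
    have := (hZmem (Gn n) (q (Gn n))).1 (hqmem (Gn n) (hPGn n).1) a (Finset.mem_insert_self a (E n))
    rw [Metric.mem_closedBall, dist_eq_norm]
    exact this
  have hwmem : w ∈ Metric.closedBall (f a) ‖z - a‖ :=
    Metric.isClosed_closedBall.mem_of_tendsto htend (Filter.Eventually.of_forall hball)
  rw [Metric.mem_closedBall, dist_eq_norm] at hwmem
  exact hwmem

lemma inner_sub_add_self' (a b : H) : ⟪a - b, a + b⟫ = ‖a‖ ^ 2 - ‖b‖ ^ 2 := by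
  rw [inner_sub_left, inner_add_right, inner_add_right, real_inner_self_eq_norm_sq,
    real_inner_self_eq_norm_sq, real_inner_comm b a]
  ring

lemma minty [CompleteSpace H] (A : H → Set H)
    (hmono : ∀ x u y v : H, y ∈ A x → v ∈ A u → 0 ≤ ⟪v - y, u - x⟫)
    (hmax : ∀ u v : H, (∀ x y : H, y ∈ A x → 0 ≤ ⟪v - y, u - x⟫) → v ∈ A u)
    (lam : ℝ) (hlam : 0 < lam) (z : H) :
    ∃ x y : H, y ∈ A x ∧ x + lam • y = z := by
  classical
  set S : Set H := {w | ∃ x y, y ∈ A x ∧ x + lam • y = w} with hS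
  have huniq : ∀ x y x' y' : H, y ∈ A x → y' ∈ A x' → x + lam • y = x' + lam • y' →
      x = x' ∧ y = y' := by
    intro x y x' y' hy hy' heq
    have h1 := hmono x x' y y' hy hy'
    have h2 : x' - x = lam • (y - y') := by
      have h3 : x' - x = lam • y - lam • y' := by
        linear_combination (norm := module) -heq
      rw [h3, smul_sub]
    have h4 : ⟪y' - y, x' - x⟫ = -(lam * ‖y' - y‖ ^ 2) := by
      rw [h2, real_inner_smul_right]
      have : ⟪y' - y, y - y'⟫ = -‖y' - y‖ ^ 2 := by
        rw [show y - y' = -(y' - y) by abel, inner_neg_right, real_inner_self_eq_norm_sq]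
      rw [this]
      ring
    rw [h4] at h1
    have h5 : ‖y' - y‖ ^ 2 ≤ 0 := by nlinarith
    have h6 : y' = y := by
      have : ‖y' - y‖ = 0 := by nlinarith [norm_nonneg (y' - y), sq_nonneg ‖y' - y‖]
      rw [norm_eq_zero, sub_eq_zero] at this
      exact this
    subst h6
    constructor
    · have : x' - x = 0 := by rw [h2]; simp
      rw [sub_eq_zero] at this
      exact this.symm
    · rfl
  have hrep : ∀ w : H, ∃ x y : H, w ∈ S → y ∈ A x ∧ x + lam • y = w := by
    intro w
    by_cases h : w ∈ S
    · obtain ⟨x, y, hy, he⟩ := h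
      exact ⟨x, y, fun _ => ⟨hy, he⟩⟩
    · exact ⟨0, 0, fun hw => absurd hw h⟩
  choose X Y hXY using hrep
  set f : H → H := fun w => X w - lam • Y w with hfdef
  have hfspec : ∀ x y : H, y ∈ A x → f (x + lam • y) = x - lam • y := by
    intro x y hy
    have hw : (x + lam • y) ∈ S := ⟨x, y, hy, rfl⟩
    obtain ⟨hy', heq⟩ := hXY _ hw
    obtain ⟨hx1, hy1⟩ := huniq _ _ _ _ hy' hy heq
    rw [hfdef]
    simp only []
    rw [hx1, hy1]
  have hlip : ∀ a ∈ S, ∀ b ∈ S, ‖f a - f b‖ ≤ ‖a - b‖ := by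
    rintro a ⟨x1, y1, hy1, rfl⟩ b ⟨x2, y2, hy2, rfl⟩
    rw [hfspec x1 y1 hy1, hfspec x2 y2 hy2]
    have hm := hmono x2 x1 y2 y1 hy2 hy1
    have e1 : (x1 - lam • y1) - (x2 - lam • y2) = (x1 - x2) - lam • (y1 - y2) := by module
    have e2 : (x1 + lam • y1) - (x2 + lam • y2) = (x1 - x2) + lam • (y1 - y2) := by module
    rw [e1, e2]
    have h1 := norm_sub_sq_real (x1 - x2) (lam • (y1 - y2))
    have h2 := norm_add_sq_real (x1 - x2) (lam • (y1 - y2))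
    have h3 : 0 ≤ ⟪x1 - x2, lam • (y1 - y2)⟫ := by
      rw [real_inner_smul_right]
      exact mul_nonneg hlam.le (by rw [real_inner_comm]; exact hm)
    nlinarith [norm_nonneg ((x1 - x2) - lam • (y1 - y2)),
      norm_nonneg ((x1 - x2) + lam • (y1 - y2))]
  obtain ⟨w, hw⟩ := kirszbraun_point S f hlip z
  set x : H := (1/2 : ℝ) • (z + w) with hx
  set y : H := (1/(2*lam) : ℝ) • (z - w) with hy
  have hlam2 : lam * (1/(2*lam)) = 1/2 := by
    field_simp
    try ring
  refine ⟨x, y, ?_, ?_⟩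
  · apply hmax
    intro x' y' hy'
    have hw' : (x' + lam • y') ∈ S := ⟨x', y', hy', rfl⟩
    have hk := hw _ hw'
    rw [hfspec x' y' hy'] at hk
    have key : 0 ≤ ⟪lam • (y - y'), x - x'⟫ := by
      have e1 : x - x' = (1/2:ℝ) • (z - (x' + lam • y')) + (1/2:ℝ) • (w - (x' - lam • y')) := by
        rw [hx]; module
      have e2 : lam • (y - y')
          = (1/2:ℝ) • (z - (x' + lam • y')) - (1/2:ℝ) • (w - (x' - lam • y')) := by
        rw [hy, smul_sub, smul_smul, hlam2]
        module
      rw [e1, e2, inner_sub_add_self']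
      have hn1 : ‖(1/2:ℝ) • (w - (x' - lam • y'))‖ = (1/2) * ‖w - (x' - lam • y')‖ := by
        rw [norm_smul]
        norm_num
      have hn2 : ‖(1/2:ℝ) • (z - (x' + lam • y'))‖ = (1/2) * ‖z - (x' + lam • y')‖ := by
        rw [norm_smul]
        norm_num
      rw [hn1, hn2]
      nlinarith [norm_nonneg (w - (x' - lam • y')), norm_nonneg (z - (x' + lam • y'))]
    rw [real_inner_smul_left] at key
    nlinarith [key]
  · rw [hx, hy, smul_smul, hlam2]
    module

end AuxiliaryLemmas

theorem stmt_8 {H : Type*} [NormedAddCommGroup H] [InnerProductSpace ℝ H] [CompleteSpace H]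
    (A : H → Set H)
    (hmono : ∀ x u y v : H, y ∈ A x → v ∈ A u → 0 ≤ ⟪v - y, u - x⟫)
    (hmax : ∀ u v : H, (∀ x y : H, y ∈ A x → 0 ≤ ⟪v - y, u - x⟫) → v ∈ A u) :
    Convex ℝ (closure {x : H | (A x).Nonempty}) := by
  set Dset : Set H := {x : H | (A x).Nonempty} with hDset
  have hseg : ∀ x0 x1 : H, (A x0).Nonempty → (A x1).Nonempty → ∀ s t : ℝ, 0 ≤ s → 0 ≤ t →
      s + t = 1 → s • x0 + t • x1 ∈ closure Dset := by
    intro x0 x1 hne0 hne1 s t hs ht hst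
    obtain ⟨y0, hy0⟩ := hne0
    obtain ⟨y1, hy1⟩ := hne1
    set z : H := s • x0 + t • x1 with hz
    rw [Metric.mem_closure_iff]
    intro ε hε
    set C : ℝ := s * (‖y0‖ * ‖z - x0‖) + t * (‖y1‖ * ‖z - x1‖) with hC
    set C' : ℝ := s * ‖y0‖ + t * ‖y1‖ with hC'
    have hCnn : 0 ≤ C := by positivity
    have hC'nn : 0 ≤ C' := by positivity
    set lam : ℝ := ε^2 / (2*(C + ε*C' + 1)) with hlamdef
    have hTpos : (0:ℝ) < C + ε*C' + 1 := by positivity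
    have hlampos : 0 < lam := by positivity
    obtain ⟨xl, yl, hyl, hxl⟩ := minty A hmono hmax lam hlampos z
    have hxz : xl = z - lam • yl := by
      linear_combination (norm := module) hxl
    -- individual estimates
    have I : ∀ x' y' : H, y' ∈ A x' →
        lam * ‖yl‖^2 ≤ ⟪yl, z - x'⟫ + ‖y'‖ * ‖z - x'‖ + lam * (‖y'‖ * ‖yl‖) := by
      intro x' y' hy'
      have h0 := hmono x' xl y' yl hy' hyl
      have e0 : xl - x' = (z - x') - lam • yl := by rw [hxz]; module
      have hexp : ⟪yl - y', xl - x'⟫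
          = ⟪yl, z - x'⟫ - ⟪y', z - x'⟫ - lam * ⟪yl, yl⟫ + lam * ⟪y', yl⟫ := by
        rw [e0]
        simp only [inner_sub_left, inner_sub_right, real_inner_smul_right]
        ring
      have h3 : ⟪yl, yl⟫ = ‖yl‖^2 := real_inner_self_eq_norm_sq yl
      rw [hexp, h3] at h0
      have h1 : -⟪y', z - x'⟫ ≤ ‖y'‖ * ‖z - x'‖ := by
        have ha := abs_real_inner_le_norm y' (z - x')
        have hb := neg_abs_le ⟪y', z - x'⟫
        linarith
      have h2 : ⟪y', yl⟫ ≤ ‖y'‖ * ‖yl‖ := real_inner_le_norm y' yl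
      have h4 := mul_le_mul_of_nonneg_left h2 hlampos.le
      linarith
    have I0 := I x0 y0 hy0
    have I1 := I x1 y1 hy1
    have hzero : s * ⟪yl, z - x0⟫ + t * ⟪yl, z - x1⟫ = 0 := by
      rw [← real_inner_smul_right yl (z - x0) s, ← real_inner_smul_right yl (z - x1) t,
        ← inner_add_right]
      have : s • (z - x0) + t • (z - x1) = (s + t) • z - (s • x0 + t • x1) := by module
      rw [this, hst, one_smul, ← hz, sub_self, inner_zero_right]
    have hkey : lam * ‖yl‖^2 ≤ C + lam * (C' * ‖yl‖) := by
      have h0 := mul_le_mul_of_nonneg_left I0 hs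
      have h1 := mul_le_mul_of_nonneg_left I1 ht
      have e : s * (lam * ‖yl‖^2) + t * (lam * ‖yl‖^2) = lam * ‖yl‖^2 := by
        rw [← add_mul, hst, one_mul]
      rw [hC, hC']
      linarith [h0, h1, hzero, e]
    -- conclude
    refine ⟨xl, ⟨yl, hyl⟩, ?_⟩
    rw [dist_eq_norm]
    have hdist : ‖z - xl‖ = lam * ‖yl‖ := by
      have e : z - xl = lam • yl := by linear_combination (norm := module) -hxl
      rw [e, norm_smul, Real.norm_eq_abs, abs_of_pos hlampos]
    rw [hdist]
    by_contra hge
    push_neg at hge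
    have hsnn : 0 ≤ lam * ‖yl‖ := le_trans hε.le hge
    have hk2 : (lam*‖yl‖)^2 ≤ lam*C + lam*C'*(lam*‖yl‖) := by
      nlinarith [mul_le_mul_of_nonneg_left hkey hlampos.le]
    have hne : C + ε*C' + 1 ≠ 0 := ne_of_gt hTpos
    have hlameq : 2*(C + ε*C' + 1) * lam = ε^2 := by
      rw [hlamdef]
      field_simp
    have m1 : 2*(C+ε*C'+1)*(lam*‖yl‖)^2 ≤ ε^2*C + ε^2*C'*(lam*‖yl‖) := by
      have h := mul_le_mul_of_nonneg_left hk2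
        (le_of_lt (show (0:ℝ) < 2*(C+ε*C'+1) by positivity))
      calc 2*(C+ε*C'+1)*(lam*‖yl‖)^2 ≤ 2*(C+ε*C'+1)*(lam*C + lam*C'*(lam*‖yl‖)) := h
        _ = (2*(C+ε*C'+1)*lam)*C + ((2*(C+ε*C'+1)*lam)*C')*(lam*‖yl‖) := by ring
        _ = ε^2*C + ε^2*C'*(lam*‖yl‖) := by rw [hlameq]
    have hs2 : ε^2 ≤ (lam*‖yl‖)^2 := by nlinarith [hge, hε]
    have p1 : ε^2*C ≤ (lam*‖yl‖)^2*C := mul_le_mul_of_nonneg_right hs2 hCnn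
    have p2 : ε*(ε*C'*(lam*‖yl‖)) ≤ (lam*‖yl‖)*(ε*C'*(lam*‖yl‖)) :=
      mul_le_mul_of_nonneg_right hge (mul_nonneg (mul_nonneg hε.le hC'nn) hsnn)
    have q1 : 0 ≤ C*(lam*‖yl‖)^2 := mul_nonneg hCnn (sq_nonneg (lam*‖yl‖))
    have q2 : 0 ≤ ε*C'*(lam*‖yl‖)^2 := mul_nonneg (mul_nonneg hε.le hC'nn) (sq_nonneg _)
    linarith [m1, p1, p2, hs2, q1, q2, mul_pos hε hε]
  -- final convexity
  intro a ha b hb s t hs ht hst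
  obtain ⟨u, hu, hut⟩ := mem_closure_iff_seq_limit.1 ha
  obtain ⟨v, hv, hvt⟩ := mem_closure_iff_seq_limit.1 hb
  have hterm : ∀ n, s • u n + t • v n ∈ closure Dset :=
    fun n => hseg (u n) (v n) (hu n) (hv n) s t hs ht hst
  have hlim : Filter.Tendsto (fun n => s • u n + t • v n) Filter.atTop (nhds (s • a + t • b)) :=
    (hut.const_smul s).add (hvt.const_smul t)
  have hmem := mem_closure_of_tendsto hlim (Filter.Eventually.of_forall hterm)
  rwa [closure_closure] at hmem
end

section
/- Let A : H → Set H be a maximal monotone operator and let u₀ belong to the interior of the domain D(A) = {x ∈ H : A x ≠ ∅}. Then A is locally bounded at u₀: there exist r₀ > 0 and M ∈ ℝ such that the closed ball B̄(u₀, r₀) is contained in D(A) and ‖v‖ ≤ M for every u ∈ B̄(u₀, r₀) and every v ∈ A u. -/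
open scoped RealInnerProductSpace

theorem stmt_10 {H : Type*} [NormedAddCommGroup H] [InnerProductSpace ℝ H] [CompleteSpace H]
    (A : H → Set H)
    (hmono : ∀ x u y v : H, y ∈ A x → v ∈ A u → 0 ≤ ⟪v - y, u - x⟫)
    (hmax : ∀ u v : H, (∀ x y : H, y ∈ A x → 0 ≤ ⟪v - y, u - x⟫) → v ∈ A u)
    (u₀ : H) (hu₀ : u₀ ∈ interior {x : H | (A x).Nonempty}) :
    ∃ r₀ : ℝ, 0 < r₀ ∧ ∃ M : ℝ,
      Metric.closedBall u₀ r₀ ⊆ {x : H | (A x).Nonempty} ∧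
      ∀ u ∈ Metric.closedBall u₀ r₀, ∀ v ∈ A u, ‖v‖ ≤ M := by
  classical
  obtain ⟨ε', hε', hball⟩ := Metric.mem_nhds_iff.mp (mem_interior_iff_mem_nhds.mp hu₀)
  set ε : ℝ := ε' / 2 with hεdef
  have hε : 0 < ε := by positivity
  set K : Set H := Metric.closedBall u₀ ε with hKdef
  have hKD : K ⊆ {x : H | (A x).Nonempty} := by
    intro x hx
    refine hball (Metric.mem_ball.mpr ?_)
    have := Metric.mem_closedBall.mp hx
    linarith
  have key : ∀ x u y v : H, y ∈ A x → v ∈ A u → ⟪v, x - u⟫ ≤ ⟪y, x - u⟫ := by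
    intro x u y v hy hv
    have h := hmono x u y v hy hv
    simp only [inner_sub_left, inner_sub_right] at h ⊢
    linarith
  set C : ℕ → Set H := fun n => {x : H | ∀ u ∈ K, ∀ v ∈ A u, ⟪v, x - u⟫ ≤ (n : ℝ)} with hCdef
  have hCclosed : ∀ n, IsClosed (C n) := by
    intro n
    have hEq : C n = ⋂ u ∈ K, ⋂ v ∈ A u, {x : H | ⟪v, x - u⟫ ≤ (n : ℝ)} := by
      ext x
      simp only [hCdef, Set.mem_setOf_eq, Set.mem_iInter]
    rw [hEq]
    refine isClosed_biInter fun u hu => isClosed_biInter fun v hv => ?_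
    exact isClosed_le (Continuous.inner continuous_const (continuous_id.sub continuous_const))
      continuous_const
  have hcover : ∀ x ∈ K, ∃ n : ℕ, x ∈ C n := by
    intro x hx
    obtain ⟨y, hy⟩ := hKD hx
    refine ⟨⌈‖y‖ * (2 * ε)⌉₊, fun u hu v hv => ?_⟩
    have h1 : ⟪v, x - u⟫ ≤ ⟪y, x - u⟫ := key x u y v hy hv
    have h2 : ⟪y, x - u⟫ ≤ ‖y‖ * ‖x - u‖ := real_inner_le_norm y (x - u)
    have h3 : ‖x - u‖ ≤ 2 * ε := by
      have hx' : dist x u₀ ≤ ε := Metric.mem_closedBall.mp hx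
      have hu' : dist u u₀ ≤ ε := Metric.mem_closedBall.mp hu
      calc ‖x - u‖ = dist x u := (dist_eq_norm x u).symm
        _ ≤ dist x u₀ + dist u₀ u := dist_triangle _ _ _
        _ ≤ ε + ε := by rw [dist_comm u₀ u]; linarith
        _ = 2 * ε := by ring
    have h4 : ‖y‖ * ‖x - u‖ ≤ ‖y‖ * (2 * ε) := mul_le_mul_of_nonneg_left h3 (norm_nonneg y)
    calc ⟪v, x - u⟫ ≤ ‖y‖ * (2 * ε) := by linarith
      _ ≤ _ := Nat.le_ceil _
  -- Baire category
  have hKclosed : IsClosed K := Metric.isClosed_closedBall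
  haveI : CompleteSpace K := hKclosed.completeSpace_coe
  haveI : Nonempty K := ⟨⟨u₀, Metric.mem_closedBall_self hε.le⟩⟩
  obtain ⟨n, ⟨xb, hxbK⟩, hxbInt⟩ := nonempty_interior_of_iUnion_of_closed
    (f := fun n : ℕ => ((↑) ⁻¹' C n : Set K))
    (fun n => (hCclosed n).preimage continuous_subtype_val)
    (by
      ext ⟨x, hx⟩
      simp only [Set.mem_iUnion, Set.mem_univ, iff_true, Set.mem_preimage]
      exact hcover x hx)
  rw [mem_interior_iff_mem_nhds, nhds_subtype_eq_comap, Filter.mem_comap] at hxbInt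
  obtain ⟨V, hV, hVsub⟩ := hxbInt
  obtain ⟨δ, hδ, hballV⟩ := Metric.mem_nhds_iff.mp hV
  have hrel : ∀ z, dist z xb < δ → z ∈ K → z ∈ C n := by
    intro z hz hzK
    exact hVsub (show ((⟨z, hzK⟩ : K) : H) ∈ V from hballV hz)
  -- geometry: shift the Baire ball to be centered strictly inside K
  set t : ℝ := min (1 / 2) (δ / (4 * ε)) with htdef
  have ht0 : 0 < t := lt_min (by norm_num) (by positivity)
  have ht1 : t ≤ 1 / 2 := min_le_left _ _
  have htε : t * ε ≤ δ / 4 := by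
    have h : t ≤ δ / (4 * ε) := min_le_right _ _
    have := mul_le_mul_of_nonneg_right h hε.le
    calc t * ε ≤ δ / (4 * ε) * ε := this
      _ = δ / 4 := by field_simp
  set s : ℝ := min (δ / 2) (t * ε) with hsdef
  have hs0 : 0 < s := lt_min (by positivity) (by positivity)
  have hsδ : s ≤ δ / 2 := min_le_left _ _
  have hstε : s ≤ t * ε := min_le_right _ _
  set x₁ : H := u₀ + (1 - t) • (xb - u₀) with hx₁def
  have hxbε : ‖xb - u₀‖ ≤ ε := by rw [← dist_eq_norm]; exact Metric.mem_closedBall.mp hxbK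
  have hx₁xb : ‖x₁ - xb‖ = t * ‖xb - u₀‖ := by
    have h : x₁ - xb = (-t) • (xb - u₀) := by rw [hx₁def]; module
    rw [h, norm_smul, Real.norm_eq_abs, abs_of_neg (by linarith : -t < 0)]; ring
  have hx₁u₀ : ‖x₁ - u₀‖ = (1 - t) * ‖xb - u₀‖ := by
    have h : x₁ - u₀ = (1 - t) • (xb - u₀) := by rw [hx₁def]; module
    rw [h, norm_smul, Real.norm_eq_abs, abs_of_pos (by linarith : (0:ℝ) < 1 - t)]
  have hball1 : ∀ z : H, ‖z - x₁‖ < s → z ∈ C n := by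
    intro z hz
    have h1 : ‖z - xb‖ < δ := by
      calc ‖z - xb‖ ≤ ‖z - x₁‖ + ‖x₁ - xb‖ := norm_sub_le_norm_sub_add_norm_sub z x₁ xb
        _ < s + t * ‖xb - u₀‖ := by
            have : t * ‖xb - u₀‖ ≤ t * ε := mul_le_mul_of_nonneg_left hxbε ht0.le
            rw [hx₁xb]; linarith [hz]
        _ ≤ δ / 2 + δ / 4 := by
            have : t * ‖xb - u₀‖ ≤ t * ε := mul_le_mul_of_nonneg_left hxbε ht0.le
            linarith
        _ < δ := by linarith
    have h2 : z ∈ K := by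
      rw [hKdef, Metric.mem_closedBall, dist_eq_norm]
      calc ‖z - u₀‖ ≤ ‖z - x₁‖ + ‖x₁ - u₀‖ := norm_sub_le_norm_sub_add_norm_sub z x₁ u₀
        _ ≤ s + (1 - t) * ε := by
            have : (1 - t) * ‖xb - u₀‖ ≤ (1 - t) * ε :=
              mul_le_mul_of_nonneg_left hxbε (by linarith)
            rw [hx₁u₀] at *; linarith [hz.le]
        _ ≤ t * ε + (1 - t) * ε := by linarith
        _ = ε := by ring
    exact hrel z (by rw [dist_eq_norm]; exact h1) h2
  -- reflected point
  set x₂ : H := u₀ - (1 - t) • (xb - u₀) with hx₂def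
  have hx₂K : x₂ ∈ K := by
    rw [hKdef, Metric.mem_closedBall, dist_eq_norm]
    have h : x₂ - u₀ = (-(1 - t)) • (xb - u₀) := by rw [hx₂def]; module
    rw [h, norm_smul, Real.norm_eq_abs, abs_neg, abs_of_pos (by linarith : (0:ℝ) < 1 - t)]
    calc (1 - t) * ‖xb - u₀‖ ≤ 1 * ε := by
          have h1 : (1 - t) * ‖xb - u₀‖ ≤ (1 - t) * ε :=
            mul_le_mul_of_nonneg_left hxbε (by linarith)
          nlinarith [norm_nonneg (xb - u₀)]
      _ = ε := one_mul ε
  obtain ⟨k, hk⟩ := hcover x₂ hx₂K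
  have hsum : x₁ + x₂ = (2 : ℝ) • u₀ := by rw [hx₁def, hx₂def]; module
  -- midpoint bound: every z close to u₀ satisfies the inequality with (n+k)/2
  have hmid : ∀ z : H, ‖z - u₀‖ ≤ s / 4 → ∀ u ∈ K, ∀ v ∈ A u,
      ⟪v, z - u⟫ ≤ ((n : ℝ) + k) / 2 := by
    intro z hz u hu v hv
    set x : H := (2 : ℝ) • z - x₂ with hxdef
    have hxx₁ : ‖x - x₁‖ < s := by
      have h : x - x₁ = (2 : ℝ) • (z - u₀) := by
        rw [hxdef]
        have : x₁ = (2 : ℝ) • u₀ - x₂ := by rw [← hsum]; abel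
        rw [this]; module
      rw [h, norm_smul, Real.norm_eq_abs]
      have : |(2 : ℝ)| = 2 := by norm_num
      rw [this]; linarith
    have hxC : x ∈ C n := hball1 x hxx₁
    have h1 : ⟪v, x - u⟫ ≤ (n : ℝ) := hxC u hu v hv
    have h2 : ⟪v, x₂ - u⟫ ≤ (k : ℝ) := hk u hu v hv
    have h3 : (2 : ℝ) * ⟪v, z - u⟫ = ⟪v, x - u⟫ + ⟪v, x₂ - u⟫ := by
      rw [← inner_add_right, ← real_inner_smul_right]
      congr 1
      rw [hxdef]; module
    linarith
  -- conclusion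
  refine ⟨min ε (s / 8), lt_min hε (by positivity), 4 * ((n : ℝ) + k) / s, ?_, ?_⟩
  · intro x hx
    refine hKD ?_
    rw [hKdef, Metric.mem_closedBall]
    exact le_trans (Metric.mem_closedBall.mp hx) (min_le_left _ _)
  · intro u hu v hv
    have huK : u ∈ K := by
      rw [hKdef, Metric.mem_closedBall]
      exact le_trans (Metric.mem_closedBall.mp hu) (min_le_left _ _)
    have hus : dist u u₀ ≤ s / 8 := le_trans (Metric.mem_closedBall.mp hu) (min_le_right _ _)
    rcases eq_or_ne v 0 with hv0 | hv0
    · rw [hv0, norm_zero]; positivity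
    · have hvn : (0 : ℝ) < ‖v‖ := norm_pos_iff.mpr hv0
      set z : H := u₀ + ((s / 4) * ‖v‖⁻¹) • v with hzdef
      have hzu₀ : ‖z - u₀‖ ≤ s / 4 := by
        have h : z - u₀ = ((s / 4) * ‖v‖⁻¹) • v := by rw [hzdef]; abel
        rw [h, norm_smul, Real.norm_eq_abs, abs_of_pos (by positivity)]
        rw [mul_assoc, inv_mul_cancel₀ hvn.ne', mul_one]
      have hb := hmid z hzu₀ u huK v hv
      have h1 : ⟪v, z - u₀⟫ = (s / 4) * ‖v‖ := by
        have h : z - u₀ = ((s / 4) * ‖v‖⁻¹) • v := by rw [hzdef]; abel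
        rw [h, real_inner_smul_right, real_inner_self_eq_norm_sq]
        field_simp
      have h2 : ⟪v, u₀ - u⟫ ≥ -(‖v‖ * (s / 8)) := by
        have hle : ⟪v, u - u₀⟫ ≤ ‖v‖ * ‖u - u₀‖ := real_inner_le_norm v (u - u₀)
        have hnn : ‖u - u₀‖ ≤ s / 8 := by rw [← dist_eq_norm]; exact hus
        have : ⟪v, u - u₀⟫ ≤ ‖v‖ * (s / 8) := by nlinarith
        have hflip : ⟪v, u₀ - u⟫ = -⟪v, u - u₀⟫ := by
          rw [← inner_neg_right]; congr 1; abel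
        linarith [hflip ▸ neg_le_neg this]
      have h3 : ⟪v, z - u⟫ = ⟪v, z - u₀⟫ + ⟪v, u₀ - u⟫ := by
        rw [← inner_add_right]; congr 1; abel
      have h4 : (s / 8) * ‖v‖ ≤ ((n : ℝ) + k) / 2 := by
        rw [h3, h1] at hb; linarith
      rw [le_div_iff₀ hs0]
      linarith
end

section
/- Let A : H → Set H be monotone, let ε ∈ (0, 1], and let J : H → H be a resolvent of A, i.e. (z − J z)/ε ∈ A (J z) for every z ∈ H; write A_ε z = (z − J z)/ε. Let a ∈ H, v₀ ∈ A a, r₀ ≥ 0, and let z ∈ H with A_ε z ≠ 0, and let û ∈ A(a + r₀·(A_ε z / ‖A_ε z‖)). Then r₀·‖A_ε z‖ ≤ ⟪A_ε z, z − a⟫ + ‖û‖·‖z − a‖ + (‖v₀‖ + r₀)·‖û‖. -/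
open scoped RealInnerProductSpace

theorem stmt_13 {H : Type*} [NormedAddCommGroup H] [InnerProductSpace ℝ H] [CompleteSpace H]
    (A : H → Set H)
    (hmono : ∀ x u y v : H, y ∈ A x → v ∈ A u → 0 ≤ ⟪v - y, u - x⟫)
    (ε : ℝ) (hε : ε ∈ Set.Ioc (0 : ℝ) 1)
    (J : H → H) (hJ : ∀ z : H, ε⁻¹ • (z - J z) ∈ A (J z))
    (Aε : H → H) (hAε : ∀ z : H, Aε z = ε⁻¹ • (z - J z))
    (a : H) (v₀ : H) (hv₀ : v₀ ∈ A a)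
    (r₀ : ℝ) (hr₀ : 0 ≤ r₀)
    (z : H) (hz : Aε z ≠ 0)
    (uh : H) (huh : uh ∈ A (a + r₀ • (‖Aε z‖⁻¹ • Aε z))) :
    r₀ * ‖Aε z‖ ≤ ⟪Aε z, z - a⟫ + ‖uh‖ * ‖z - a‖ + (‖v₀‖ + r₀) * ‖uh‖ := by
  obtain ⟨hε0, hε1⟩ := hε
  set u := Aε z with hu
  have hεne : ε ≠ 0 := ne_of_gt hε0
  have huA : u ∈ A (J z) := by rw [hu, hAε]; exact hJ z
  have hzJ : z - J z = ε • u := by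
    rw [hu, hAε, smul_smul, mul_inv_cancel₀ hεne, one_smul]
  have hnpos : (0:ℝ) < ‖u‖ := norm_pos_iff.mpr hz
  have hself : ⟪u, u⟫ = ‖u‖ * ‖u‖ := real_inner_self_eq_norm_mul_norm u
  -- bound ‖J z - a‖ ≤ ‖z - a‖ + ‖v₀‖
  have h2 : 0 ≤ ⟪u - v₀, J z - a⟫ := hmono a (J z) v₀ u hv₀ huA
  have h2' : ⟪v₀, J z - a⟫ ≤ ⟪u, J z - a⟫ := by
    rw [inner_sub_left] at h2; linarith
  have hcv : -(‖v₀‖ * ‖J z - a‖) ≤ ⟪v₀, J z - a⟫ := by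
    have := abs_real_inner_le_norm v₀ (J z - a)
    have := abs_le.mp this
    linarith [this.1]
  have hdecomp : ⟪J z - a, J z - a⟫ = ⟪z - a, J z - a⟫ - ε * ⟪u, J z - a⟫ := by
    have h3 : J z - a = (z - a) - (z - J z) := by abel
    rw [h3, inner_sub_left, hzJ, real_inner_smul_left]
  have hca : ⟪z - a, J z - a⟫ ≤ ‖z - a‖ * ‖J z - a‖ := real_inner_le_norm _ _
  have hJself : ⟪J z - a, J z - a⟫ = ‖J z - a‖ * ‖J z - a‖ :=
    real_inner_self_eq_norm_mul_norm _
  have hJa : ‖J z - a‖ ≤ ‖z - a‖ + ‖v₀‖ := by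
    rcases eq_or_lt_of_le (norm_nonneg (J z - a)) with h0 | h0
    · rw [← h0]; positivity
    · nlinarith [mul_nonneg (norm_nonneg v₀) (norm_nonneg (J z - a)),
        mul_le_mul_of_nonneg_right hε1 (mul_nonneg (norm_nonneg v₀) (norm_nonneg (J z - a)))]
  -- main monotonicity inequality
  have h1 : 0 ≤ ⟪uh - u, (a + r₀ • (‖u‖⁻¹ • u)) - J z⟫ :=
    hmono (J z) (a + r₀ • (‖u‖⁻¹ • u)) u uh huA huh
  have hw : (a + r₀ • (‖u‖⁻¹ • u)) - J z = (a - J z) + r₀ • (‖u‖⁻¹ • u) := by abel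
  rw [hw] at h1
  simp only [inner_add_right, inner_sub_left, real_inner_smul_right] at h1
  have hsplit : ⟪u, a - J z⟫ = -⟪u, z - a⟫ + ε * (‖u‖ * ‖u‖) := by
    have h3 : a - J z = -(z - a) + (z - J z) := by abel
    rw [h3, inner_add_right, inner_neg_right, hzJ, real_inner_smul_right, hself]
  have hc1 : ⟪uh, a - J z⟫ ≤ ‖uh‖ * ‖J z - a‖ := by
    have := real_inner_le_norm uh (a - J z)
    rwa [norm_sub_rev a (J z)] at this
  have hc2 : ⟪uh, u⟫ ≤ ‖uh‖ * ‖u‖ := real_inner_le_norm _ _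
  have hinv : ‖u‖⁻¹ * ‖u‖ = 1 := inv_mul_cancel₀ (ne_of_gt hnpos)
  have hr1 : r₀ * (‖u‖⁻¹ * ⟪u, u⟫) = r₀ * ‖u‖ := by
    rw [hself]
    field_simp
  have hr2 : r₀ * (‖u‖⁻¹ * ⟪uh, u⟫) ≤ r₀ * ‖uh‖ := by
    have : ‖u‖⁻¹ * ⟪uh, u⟫ ≤ ‖u‖⁻¹ * (‖uh‖ * ‖u‖) :=
      mul_le_mul_of_nonneg_left hc2 (le_of_lt (inv_pos.mpr hnpos))
    have heq : ‖u‖⁻¹ * (‖uh‖ * ‖u‖) = ‖uh‖ := by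
      field_simp
    nlinarith
  nlinarith [mul_nonneg (norm_nonneg uh) (norm_nonneg v₀),
    mul_nonneg (le_of_lt hε0) (mul_nonneg (norm_nonneg u) (norm_nonneg u)),
    mul_le_mul_of_nonneg_left hJa (norm_nonneg uh)]
end

section
/- Let a ∈ H and r₀ ≥ 0 be such that the closed ball B̄(a, r₀) is contained in C. Then for every z ∈ H, r₀·‖z − P z‖ + ‖z − P z‖² ≤ ⟪z − P z, z − a⟫; equivalently, r₀·‖z − P z‖ ≤ ⟪z − P z, P z − a⟫. -/
open scoped RealInnerProductSpace

theorem stmt_14 {H : Type*} [NormedAddCommGroup H] [InnerProductSpace ℝ H] [CompleteSpace H]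
    (C : Set H) (hCne : C.Nonempty) (hCcl : IsClosed C) (hCcv : Convex ℝ C)
    (P : H → H)
    (hP : ∀ z : H, P z ∈ C ∧ ∀ c ∈ C, ⟪P z - z, P z - c⟫ ≤ 0)
    (a : H) (r₀ : ℝ) (hr₀ : 0 ≤ r₀) (hball : Metric.closedBall a r₀ ⊆ C) :
    ∀ z : H,
      r₀ * ‖z - P z‖ + ‖z - P z‖ ^ 2 ≤ ⟪z - P z, z - a⟫ ∧
      r₀ * ‖z - P z‖ ≤ ⟪z - P z, P z - a⟫ := by
  intro z
  set u := z - P z with hu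
  have key : r₀ * ‖u‖ ≤ ⟪u, P z - a⟫ := by
    rcases eq_or_ne u 0 with h0 | h0
    · simp [h0]
    · have hn : 0 < ‖u‖ := norm_pos_iff.mpr h0
      set c := a + (r₀ / ‖u‖) • u with hc
      have hcC : c ∈ C := by
        apply hball
        simp only [Metric.mem_closedBall, dist_eq_norm, hc, add_sub_cancel_left,
          norm_smul, Real.norm_eq_abs, abs_div, abs_of_nonneg hr₀, abs_of_pos hn]
        rw [div_mul_cancel₀ _ hn.ne']
      have hvar := (hP z).2 c hcC
      have e1 : P z - z = -u := by rw [hu]; abel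
      have e2 : P z - c = (P z - a) - (r₀ / ‖u‖) • u := by rw [hc]; abel
      have : ⟪P z - z, P z - c⟫ = -⟪u, P z - a⟫ + (r₀ / ‖u‖) * ‖u‖ ^ 2 := by
        rw [e1, e2, inner_neg_left, inner_sub_right, inner_smul_right,
          real_inner_self_eq_norm_sq]
        ring
      rw [this] at hvar
      have h2 : (r₀ / ‖u‖) * ‖u‖ ^ 2 = r₀ * ‖u‖ := by
        field_simp
      rw [h2] at hvar
      linarith
  have hsplit : ⟪u, z - a⟫ = ‖u‖ ^ 2 + ⟪u, P z - a⟫ := by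
    have : z - a = u + (P z - a) := by rw [hu]; abel
    rw [this, inner_add_right, real_inner_self_eq_norm_sq]
  constructor
  · rw [hsplit]; linarith
  · exact key
end

section
/- Let T > 0 and let k : ℝ → H be right-continuous at every point of [0, T). For N ∈ ℕ set V_N(k) = ∑_{j=0}^{2^N − 1} ‖k((j+1)·T/2^N) − k(j·T/2^N)‖. Then the sequence N ↦ V_N(k) is nondecreasing and sup_N V_N(k) equals the total variation of k on [0, T] (as an equality in [0, ∞], i.e. ⨆_N ENNReal.ofReal (V_N(k)) = eVariationOn k (Set.Icc 0 T)). -/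
open scoped ENNReal NNReal

private lemma sum_two_mul' {M : Type*} [AddCommMonoid M] (f : ℕ → M) :
    ∀ m, ∑ j ∈ Finset.range (2 * m), f j = ∑ j ∈ Finset.range m, (f (2 * j) + f (2 * j + 1))
  | 0 => by simp
  | m + 1 => by
    have h : 2 * (m + 1) = 2 * m + 1 + 1 := by ring
    rw [h, Finset.sum_range_succ, Finset.sum_range_succ, sum_two_mul' f m,
      Finset.sum_range_succ, add_assoc]

private lemma tele {H : Type*} [NormedAddCommGroup H] (w : ℕ → H) {a : ℕ} :
    ∀ {b : ℕ}, a ≤ b → ‖w b - w a‖ ≤ ∑ j ∈ Finset.Ico a b, ‖w (j + 1) - w j‖ := by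
  intro b
  induction b with
  | zero => intro h; interval_cases a; simp
  | succ b ih =>
    intro h
    rcases Nat.lt_or_ge a (b + 1) with h' | h'
    · have hab : a ≤ b := Nat.lt_succ_iff.mp h'
      rw [Finset.sum_Ico_succ_top hab,
        show w (b + 1) - w a = (w b - w a) + (w (b + 1) - w b) from by abel]
      exact (norm_add_le _ _).trans (by gcongr; exact ih hab)
    · have : a = b + 1 := le_antisymm h h'
      subst this; simp

private lemma chain {H : Type*} [NormedAddCommGroup H] (w : ℕ → H) (m : ℕ → ℕ)
    (hm : Monotone m) :
    ∀ n, ∑ i ∈ Finset.range n, ‖w (m (i + 1)) - w (m i)‖ ≤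
      ∑ j ∈ Finset.Ico (m 0) (m n), ‖w (j + 1) - w j‖ := by
  intro n
  induction n with
  | zero => simp
  | succ n ih =>
    rw [Finset.sum_range_succ,
      ← Finset.sum_Ico_consecutive _ (hm (Nat.zero_le n)) (hm (Nat.le_succ n))]
    gcongr
    exact tele w (hm (Nat.le_succ n))

theorem stmt_15 {H : Type*} [NormedAddCommGroup H] [InnerProductSpace ℝ H] [CompleteSpace H]
    (T : ℝ) (hT : 0 < T) (k : ℝ → H)
    (hk : ∀ t ∈ Set.Ico (0 : ℝ) T, ContinuousWithinAt k (Set.Ici t) t)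
    (V : ℕ → ℝ)
    (hV : ∀ N : ℕ, V N =
      ∑ j ∈ Finset.range (2 ^ N),
        ‖k (((j : ℝ) + 1) * T / 2 ^ N) - k ((j : ℝ) * T / 2 ^ N)‖) :
    Monotone V ∧
      (⨆ N : ℕ, ENNReal.ofReal (V N)) = eVariationOn k (Set.Icc 0 T) := by
  have hVnn : ∀ N, 0 ≤ V N := by
    intro N; rw [hV N]; positivity
  constructor
  · apply monotone_nat_of_le_succ
    intro N
    rw [hV N, hV (N + 1)]
    have h2 : (2 : ℕ) ^ (N + 1) = 2 * 2 ^ N := by ring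
    rw [h2, sum_two_mul']
    apply Finset.sum_le_sum
    intro j _
    have e1 : ((2 * j : ℕ) : ℝ) * T / 2 ^ (N + 1) = (j : ℝ) * T / 2 ^ N := by
      push_cast; ring
    have e3 : ((2 * j + 1 : ℕ) : ℝ) * T / 2 ^ (N + 1)
        = (((2 * j : ℕ) : ℝ) + 1) * T / 2 ^ (N + 1) := by push_cast; ring
    have e4 : (((2 * j + 1 : ℕ) : ℝ) + 1) * T / 2 ^ (N + 1) = ((j : ℝ) + 1) * T / 2 ^ N := by
      push_cast; ring
    rw [e1, e3, e4]
    set A := k ((j : ℝ) * T / 2 ^ N)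
    set B := k ((((2 * j : ℕ) : ℝ) + 1) * T / 2 ^ (N + 1))
    set C := k (((j : ℝ) + 1) * T / 2 ^ N)
    rw [show C - A = (B - A) + (C - B) from by abel]
    exact norm_add_le _ _
  · have h2N : ∀ N : ℕ, (0 : ℝ) < 2 ^ N := fun N => by positivity
    apply le_antisymm
    · apply iSup_le
      intro N
      set u : ℕ → ℝ := fun j => ((min j (2 ^ N) : ℕ) : ℝ) * T / 2 ^ N with hu_def
      have hum : Monotone u := by
        intro a b hab
        have h1 : ((min a (2 ^ N) : ℕ) : ℝ) ≤ ((min b (2 ^ N) : ℕ) : ℝ) := by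
          exact_mod_cast min_le_min hab le_rfl
        simp only [hu_def]
        have := h2N N
        gcongr
      have hus : ∀ i, u i ∈ Set.Icc (0 : ℝ) T := by
        intro i
        constructor
        · simp only [hu_def]; positivity
        · simp only [hu_def]
          rw [div_le_iff₀ (h2N N)]
          have : ((min i (2 ^ N) : ℕ) : ℝ) ≤ (2 : ℝ) ^ N := by
            exact_mod_cast min_le_right i (2 ^ N)
          nlinarith
      have key := eVariationOn.sum_le (f := k) (n := 2 ^ N) hum hus
      refine le_trans (le_of_eq ?_) key
      rw [hV N, ENNReal.ofReal_sum_of_nonneg (fun i _ => by positivity)]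
      apply Finset.sum_congr rfl
      intro i hi
      rw [Finset.mem_range] at hi
      have hui : u i = (i : ℝ) * T / 2 ^ N := by
        simp only [hu_def, min_eq_left hi.le]
      have hui1 : u (i + 1) = ((i : ℝ) + 1) * T / 2 ^ N := by
        simp only [hu_def, min_eq_left (Nat.succ_le_of_lt hi)]
        push_cast; ring
      rw [hui, hui1, edist_dist, dist_eq_norm]
    · rw [eVariationOn]
      apply iSup_le
      rintro ⟨n, u, hu, us⟩
      simp only
      apply ENNReal.le_of_forall_pos_le_add
      intro ε hε _
      have hεR : (0 : ℝ) < (ε : ℝ) := hε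
      set ε' : ℝ := (ε : ℝ) / (2 * n + 2) with hε'_def
      have hε'pos : 0 < ε' := by positivity
      -- right-continuity data
      have hδ : ∀ i : ℕ, ∃ δ : ℝ, 0 < δ ∧
          ∀ s : ℝ, u i ≤ s → s ≤ T → s - u i < δ → ‖k s - k (u i)‖ ≤ ε' := by
        intro i
        rcases eq_or_lt_of_le (us i).2 with hE | hlt
        · refine ⟨1, one_pos, fun s h1 h2 _ => ?_⟩
          have : s = u i := le_antisymm (hE ▸ h2) h1
          simp [this, hε'pos.le]
        · have hc := hk (u i) ⟨(us i).1, hlt⟩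
          rw [Metric.continuousWithinAt_iff] at hc
          obtain ⟨δ, hδpos, hδ⟩ := hc ε' hε'pos
          refine ⟨δ, hδpos, fun s h1 _ h3 => ?_⟩
          rw [← dist_eq_norm]
          exact le_of_lt (hδ (Set.mem_Ici.2 h1)
            (by rw [Real.dist_eq, abs_of_nonneg (by linarith)]; linarith))
      choose δ hδpos hδprop using hδ
      set D : ℝ := (Finset.range (n + 1)).inf' ⟨0, Finset.mem_range.2 (Nat.succ_pos n)⟩ δ with hD_def
      have hDpos : 0 < D := by
        rw [hD_def]; refine (Finset.lt_inf'_iff _).2 ?_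
        exact fun i _ => hδpos i
      obtain ⟨N, hN⟩ := pow_unbounded_of_one_lt (T / D) (one_lt_two (α := ℝ))
      have hTN : T / 2 ^ N < D := by
        rw [div_lt_iff₀ (h2N N)]
        rw [div_lt_iff₀ hDpos] at hN
        linarith
      -- dyadic approximations
      set m : ℕ → ℕ := fun i => ⌈u i * 2 ^ N / T⌉₊ with hm_def
      have hmmono : Monotone m := by
        intro a b hab
        apply Nat.ceil_le_ceil
        have h1 : u a ≤ u b := hu hab
        have := h2N N
        gcongr
      have hmle : ∀ i, m i ≤ 2 ^ N := by
        intro i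
        rw [hm_def]
        apply Nat.ceil_le.2
        rw [div_le_iff₀ hT]
        push_cast
        nlinarith [(us i).2, h2N N]
      set s : ℕ → ℝ := fun i => (m i : ℝ) * T / 2 ^ N with hs_def
      have hs_ge : ∀ i, u i ≤ s i := by
        intro i
        have h1 := Nat.le_ceil (u i * 2 ^ N / T)
        rw [div_le_iff₀ hT] at h1
        simp only [hs_def]
        rw [le_div_iff₀ (h2N N)]
        exact h1
      have hs_le_T : ∀ i, s i ≤ T := by
        intro i
        have := hmle i
        simp only [hs_def]
        rw [div_le_iff₀ (h2N N)]
        have : ((m i : ℕ) : ℝ) ≤ (2 : ℝ) ^ N := by exact_mod_cast hmle i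
        nlinarith
      have hs_lt : ∀ i, s i - u i < T / 2 ^ N := by
        intro i
        have h1 : ((m i : ℕ) : ℝ) < u i * 2 ^ N / T + 1 :=
          Nat.ceil_lt_add_one (div_nonneg (mul_nonneg (us i).1 (h2N N).le) hT.le)
        have h2 : (m i : ℝ) * T / 2 ^ N < (u i * 2 ^ N / T + 1) * T / 2 ^ N := by
          gcongr
        have h3 : (u i * 2 ^ N / T + 1) * T / 2 ^ N = u i + T / 2 ^ N := by
          field_simp
        have h4 := h2.trans_eq h3
        simp only [hs_def]
        linarith
      have hclose : ∀ i ≤ n, ‖k (s i) - k (u i)‖ ≤ ε' := by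
        intro i hi
        apply hδprop i (s i) (hs_ge i) (hs_le_T i)
        calc s i - u i < T / 2 ^ N := hs_lt i
          _ < D := hTN
          _ ≤ δ i := by
              rw [hD_def]
              exact Finset.inf'_le δ (Finset.mem_range.2 (Nat.lt_succ_of_le hi))
      set w : ℕ → H := fun j => k ((j : ℝ) * T / 2 ^ N) with hw_def
      have hreal : ∑ i ∈ Finset.range n, ‖k (u (i + 1)) - k (u i)‖ ≤ V N + (ε : ℝ) := by
        have step1 : ∑ i ∈ Finset.range n, ‖k (u (i + 1)) - k (u i)‖ ≤
            ∑ i ∈ Finset.range n, (‖w (m (i + 1)) - w (m i)‖ + (ε' + ε')) := by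
          apply Finset.sum_le_sum
          intro i hi
          rw [Finset.mem_range] at hi
          have hsw : ∀ j, k (s j) = w (m j) := fun j => rfl
          have t1 : ‖k (u (i + 1)) - k (u i)‖ ≤
              ‖k (s (i + 1)) - k (s i)‖ + ‖k (s (i + 1)) - k (u (i + 1))‖ +
                ‖k (s i) - k (u i)‖ := by
            have : k (u (i + 1)) - k (u i) =
                (k (s (i + 1)) - k (s i)) - (k (s (i + 1)) - k (u (i + 1))) +
                  (k (s i) - k (u i)) := by abel
            rw [this]
            calc ‖_ + (k (s i) - k (u i))‖ ≤
                ‖(k (s (i + 1)) - k (s i)) - (k (s (i + 1)) - k (u (i + 1)))‖ +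
                  ‖k (s i) - k (u i)‖ := norm_add_le _ _
              _ ≤ _ := by gcongr; exact norm_sub_le _ _
          simp only [hsw] at t1
          have c1 := hclose (i + 1) hi
          have c2 := hclose i (Nat.le_of_lt hi)
          simp only [hsw] at c1 c2 ⊢
          linarith
        rw [Finset.sum_add_distrib, Finset.sum_const, Finset.card_range, nsmul_eq_mul] at step1
        have step2 : ∑ i ∈ Finset.range n, ‖w (m (i + 1)) - w (m i)‖ ≤ V N := by
          calc ∑ i ∈ Finset.range n, ‖w (m (i + 1)) - w (m i)‖ ≤
              ∑ j ∈ Finset.Ico (m 0) (m n), ‖w (j + 1) - w j‖ := chain w m hmmono n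
            _ ≤ ∑ j ∈ Finset.range (2 ^ N), ‖w (j + 1) - w j‖ := by
                apply Finset.sum_le_sum_of_subset_of_nonneg
                · intro j hj
                  rw [Finset.mem_Ico] at hj
                  rw [Finset.mem_range]
                  exact lt_of_lt_of_le hj.2 (hmle n)
                · intros; positivity
            _ = V N := by
                rw [hV N]
                apply Finset.sum_congr rfl
                intro j _
                simp only [hw_def]
                congr 2
                push_cast; ring
        have hfrac : (n : ℝ) * (ε' + ε') ≤ (ε : ℝ) := by
          have hn : (0 : ℝ) ≤ (n : ℝ) := Nat.cast_nonneg n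
          have hpos : (0 : ℝ) < 2 * (n : ℝ) + 2 := by positivity
          calc (n : ℝ) * (ε' + ε') = (ε : ℝ) * (2 * n) / (2 * n + 2) := by
                rw [hε'_def]; ring
            _ ≤ (ε : ℝ) := by rw [div_le_iff₀ hpos]; nlinarith
        linarith
      calc ∑ i ∈ Finset.range n, edist (k (u (i + 1))) (k (u i))
          = ENNReal.ofReal (∑ i ∈ Finset.range n, ‖k (u (i + 1)) - k (u i)‖) := by
            rw [ENNReal.ofReal_sum_of_nonneg (fun i _ => by positivity)]
            exact Finset.sum_congr rfl fun i _ => by rw [edist_dist, dist_eq_norm]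
        _ ≤ ENNReal.ofReal (V N + (ε : ℝ)) := ENNReal.ofReal_le_ofReal hreal
        _ = ENNReal.ofReal (V N) + ENNReal.ofReal (ε : ℝ) :=
            ENNReal.ofReal_add (hVnn N) hεR.le
        _ = ENNReal.ofReal (V N) + (ε : ℝ≥0∞) := by rw [ENNReal.ofReal_coe_nnreal]
        _ ≤ (⨆ N : ℕ, ENNReal.ofReal (V N)) + (ε : ℝ≥0∞) := by
            gcongr
            exact le_iSup (fun N => ENNReal.ofReal (V N)) N
end

section
/- Suppose C satisfies the r₀-interior uniform ball condition: there is r₀ > 0 such that for every z ∉ C the closed ball B̄(P z − r₀·u_z, r₀) is contained in C, where u_z = (z − P z)/‖z − P z‖. Let δ ∈ [0, 1] and define Π^δ w = P w − δ·(w − P w). Then for every z ∈ H there exists n₀ ∈ ℕ such that the n₀-fold iterate satisfies (Π^δ)^[n₀] z ∈ C. -/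
open scoped RealInnerProductSpace

theorem stmt_19 {H : Type*} [NormedAddCommGroup H] [InnerProductSpace ℝ H] [CompleteSpace H]
    (C : Set H) (hCne : C.Nonempty) (hCcl : IsClosed C) (hCcv : Convex ℝ C)
    (P : H → H)
    (hP : ∀ z : H, P z ∈ C ∧ ∀ c ∈ C, ⟪P z - z, P z - c⟫ ≤ 0)
    (r₀ : ℝ) (hr₀ : 0 < r₀)
    (hball : ∀ z : H, z ∉ C →
      Metric.closedBall (P z - r₀ • (‖z - P z‖⁻¹ • (z - P z))) r₀ ⊆ C)
    (δ : ℝ) (hδ : δ ∈ Set.Icc (0 : ℝ) 1)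
    (Pd : H → H) (hPd : ∀ w : H, Pd w = P w - δ • (w - P w)) :
    ∀ z : H, ∃ n₀ : ℕ, Pd^[n₀] z ∈ C := by
  obtain ⟨hδ0, hδ1⟩ := hδ
  -- P fixes points of C
  have hPfix : ∀ z ∈ C, P z = z := by
    intro z hz
    have h := (hP z).2 z hz
    have hsq : ‖P z - z‖ ^ 2 ≤ 0 := by
      rw [← real_inner_self_eq_norm_sq]; exact h
    have h2 : ‖P z - z‖ = 0 := by nlinarith [norm_nonneg (P z - z)]
    exact sub_eq_zero.mp (norm_eq_zero.mp h2)
  have hPdfix : ∀ z ∈ C, Pd z = z := by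
    intro z hz
    rw [hPd, hPfix z hz, sub_self, smul_zero, sub_zero]
  -- nearest point property
  have hnear : ∀ w : H, ∀ c ∈ C, ‖w - P w‖ ≤ ‖w - c‖ := by
    intro w c hc
    have h := (hP w).2 c hc
    have hsplit : w - c = (w - P w) + (P w - c) := by abel
    have hexp : ‖w - c‖ ^ 2 =
        ‖w - P w‖ ^ 2 + 2 * ⟪w - P w, P w - c⟫ + ‖P w - c‖ ^ 2 := by
      rw [hsplit, ← real_inner_self_eq_norm_sq, ← real_inner_self_eq_norm_sq,
        ← real_inner_self_eq_norm_sq]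
      rw [inner_add_add_self, real_inner_comm (P w - c) (w - P w)]
      ring
    have hin : (0:ℝ) ≤ ⟪w - P w, P w - c⟫ := by
      have : ⟪w - P w, P w - c⟫ = -⟪P w - w, P w - c⟫ := by
        rw [← inner_neg_left, neg_sub]
      linarith [this ▸ neg_nonneg.mpr h]
    have hkey : ‖w - P w‖ ^ 2 ≤ ‖w - c‖ ^ 2 := by nlinarith [sq_nonneg ‖P w - c‖]
    nlinarith [norm_nonneg (w - P w), norm_nonneg (w - c)]
  have main : ∀ n : ℕ, ∀ z : H, ‖z - P z‖ ≤ 2 * r₀ * n → Pd^[n] z ∈ C := by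
    intro n
    induction n with
    | zero =>
      intro z hz
      simp only [Nat.cast_zero, mul_zero] at hz
      have h0 : ‖z - P z‖ = 0 := le_antisymm hz (norm_nonneg _)
      have : z = P z := sub_eq_zero.mp (norm_eq_zero.mp h0)
      rw [Function.iterate_zero_apply, this]
      exact (hP z).1
    | succ n ih =>
      intro z hz
      rw [Function.iterate_succ_apply]
      by_cases hzC : z ∈ C
      · apply ih
        rw [hPdfix z hzC, hPfix z hzC, sub_self, norm_zero]
        positivity
      · set d := ‖z - P z‖ with hd
        set u := ‖z - P z‖⁻¹ • (z - P z) with hu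
        have hdpos : 0 < d := by
          rw [hd, norm_pos_iff, sub_ne_zero]
          intro he
          exact hzC (he ▸ (hP z).1)
        have hunorm : ‖u‖ = 1 := by
          rw [hu, norm_smul, norm_inv, norm_norm, inv_mul_cancel₀ hdpos.ne']
        have hsm : δ • (z - P z) = (δ * d) • u := by
          rw [hu, smul_smul, mul_assoc, mul_inv_cancel₀ hdpos.ne', mul_one]
        have hPdz : Pd z = P z - (δ * d) • u := by rw [hPd, hsm]
        by_cases hcase : δ * d ≤ 2 * r₀
        · -- Pd z lands in C directly
          have hin : Pd z ∈ C := by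
            apply hball z hzC
            rw [Metric.mem_closedBall, dist_eq_norm]
            have heq : Pd z - (P z - r₀ • u) = (r₀ - δ * d) • u := by
              rw [hPdz]; module
            rw [heq, norm_smul, hunorm, mul_one, Real.norm_eq_abs, abs_le]
            constructor <;> nlinarith [mul_nonneg hδ0 hdpos.le]
          apply ih
          rw [hPfix _ hin, sub_self, norm_zero]
          positivity
        · push_neg at hcase
          apply ih
          have hcC : P z - (2 * r₀) • u ∈ C := by
            apply hball z hzC
            rw [Metric.mem_closedBall, dist_eq_norm]
            have heq : P z - (2 * r₀) • u - (P z - r₀ • u) = (-r₀) • u := by module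
            rw [heq, norm_smul, hunorm, mul_one, Real.norm_eq_abs, abs_neg,
              abs_of_pos hr₀]
          have hle := hnear (Pd z) _ hcC
          have heq2 : Pd z - (P z - (2 * r₀) • u) = (2 * r₀ - δ * d) • u := by
            rw [hPdz]; module
          rw [heq2, norm_smul, hunorm, mul_one, Real.norm_eq_abs] at hle
          have habs : |2 * r₀ - δ * d| = δ * d - 2 * r₀ := by
            rw [abs_of_nonpos (by linarith)]; ring
          rw [habs] at hle
          have hdd : δ * d ≤ d := by nlinarith
          push_cast at hz ⊢
          nlinarith
  intro z
  refine ⟨⌈‖z - P z‖ / (2 * r₀)⌉₊, main _ z ?_⟩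
  have h1 : ‖z - P z‖ / (2 * r₀) ≤ ⌈‖z - P z‖ / (2 * r₀)⌉₊ := Nat.le_ceil _
  rw [div_le_iff₀ (by linarith)] at h1
  linarith [h1]
end
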